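/- arXiv:1412.3168 — 2 statements merged into one kernel-verified Lean document; each statement's English description precedes it below -/
import Mathlib

section
/- Every surjective group homomorphism from a finitely generated free group to itself is an isomorphism (finitely generated free groups are Hopfian). -/
/-- A reduced word has no adjacent cancelling pair (positional form). -/
lemma aux_no_cancel {α : Type*} [DecidableEq α] (w : FreeGroup α) (i : ℕ) (x : α) (b : Bool)
    (h1 : w.toWord[i]? = some (x, b)) (h2 : w.toWord[i+1]? = some (x, !b)) : False := by
  set L := w.toWord with hL
  have hred : FreeGroup.reduce L = L := w.reduce_toWord
  obtain ⟨hi1, hg1⟩ := List.getElem?_eq_some_iff.mp h1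
  obtain ⟨hi2, hg2⟩ := List.getElem?_eq_some_iff.mp h2
  have d1 : L.drop i = L[i] :: L.drop (i + 1) := (List.getElem_cons_drop hi1).symm
  have d2 : L.drop (i+1) = L[i+1] :: L.drop (i + 2) := (List.getElem_cons_drop hi2).symm
  have hsplit : L = L.take i ++ (x, b) :: (x, !b) :: L.drop (i + 2) := by
    conv_lhs => rw [← List.take_append_drop i L]
    rw [d1, d2, hg1, hg2]
  exact FreeGroup.reduce.not (hred.trans hsplit)

section Stallings

variable {α : Type*} [DecidableEq α]

/-- "No cancelling adjacent pair" property of a word. -/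
def auxNC (L : List (α × Bool)) : Prop :=
  ∀ (i : ℕ) (x : α) (b : Bool), L[i]? = some (x, b) → L[i+1]? = some (x, !b) → False

/-- Domain of the partial injection attached to the generator `a`. -/
def auxP (L : List (α × Bool)) (a : α) (c : Fin (L.length + 1)) : Prop :=
  ((c : ℕ) < L.length ∧ L[L.length - 1 - (c : ℕ)]? = some (a, true)) ∨
    L[L.length - (c : ℕ)]? = some (a, false)

/-- Range of the partial injection attached to the generator `a`. -/
def auxQ (L : List (α × Bool)) (a : α) (c : Fin (L.length + 1)) : Prop :=
  L[L.length - (c : ℕ)]? = some (a, true) ∨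
    ((c : ℕ) < L.length ∧ L[L.length - 1 - (c : ℕ)]? = some (a, false))

instance (L : List (α × Bool)) (a : α) : DecidablePred (auxP L a) := fun c => by
  unfold auxP; infer_instance

instance (L : List (α × Bool)) (a : α) : DecidablePred (auxQ L a) := fun c => by
  unfold auxQ; infer_instance

/-- The partial injection attached to `a`, as an equivalence between subtypes. -/
def auxEqv (L : List (α × Bool)) (hL : auxNC L) (a : α) :
    {c : Fin (L.length + 1) // auxP L a c} ≃ {c : Fin (L.length + 1) // auxQ L a c} where
  toFun c :=
    if h : (c.1 : ℕ) < L.length ∧ L[L.length - 1 - (c.1 : ℕ)]? = some (a, true) then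
      ⟨⟨(c.1 : ℕ) + 1, by omega⟩, Or.inl (by
        have : L.length - ((c.1 : ℕ) + 1) = L.length - 1 - (c.1 : ℕ) := by omega
        simpa [auxQ, this] using h.2)⟩
    else
      ⟨⟨(c.1 : ℕ) - 1, by have := c.1.isLt; omega⟩, by
        have h2 : L[L.length - (c.1 : ℕ)]? = some (a, false) := c.2.resolve_left h
        have hb : L.length - (c.1 : ℕ) < L.length := (List.getElem?_eq_some_iff.mp h2).1
        have hlt := c.1.isLt
        refine Or.inr ⟨by simp only [Fin.val_mk]; omega, ?_⟩
        have : L.length - 1 - ((c.1 : ℕ) - 1) = L.length - (c.1 : ℕ) := by omega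
        simpa [this] using h2⟩
  invFun c :=
    if h : L[L.length - (c.1 : ℕ)]? = some (a, true) then
      ⟨⟨(c.1 : ℕ) - 1, by have := c.1.isLt; omega⟩, by
        have hb : L.length - (c.1 : ℕ) < L.length := (List.getElem?_eq_some_iff.mp h).1
        have hlt := c.1.isLt
        refine Or.inl ⟨by simp only [Fin.val_mk]; omega, ?_⟩
        have : L.length - 1 - ((c.1 : ℕ) - 1) = L.length - (c.1 : ℕ) := by omega
        simpa [this] using h⟩
    else
      ⟨⟨(c.1 : ℕ) + 1, by
        have h2 := c.2.resolve_left h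
        omega⟩, by
        have h2 := c.2.resolve_left h
        refine Or.inr ?_
        have : L.length - ((c.1 : ℕ) + 1) = L.length - 1 - (c.1 : ℕ) := by omega
        simpa [this] using h2.2⟩
  left_inv := by
    rintro ⟨c, hc⟩
    by_cases h : (c : ℕ) < L.length ∧ L[L.length - 1 - (c : ℕ)]? = some (a, true)
    · simp only [dif_pos h]
      have hcond : L[L.length - (((c : ℕ) + 1))]? = some (a, true) := by
        have : L.length - ((c : ℕ) + 1) = L.length - 1 - (c : ℕ) := by omega
        rw [this]; exact h.2
      simp only [Fin.val_mk, dif_pos hcond]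
      exact Subtype.ext (Fin.ext (by simp))
    · simp only [dif_neg h]
      have h2 : L[L.length - (c : ℕ)]? = some (a, false) := hc.resolve_left h
      have hb : L.length - (c : ℕ) < L.length := (List.getElem?_eq_some_iff.mp h2).1
      have hlt := c.isLt
      have hcond : ¬ L[L.length - (((c : ℕ) - 1))]? = some (a, true) := by
        intro hcon
        have he : L.length - ((c : ℕ) - 1) = (L.length - (c : ℕ)) + 1 := by omega
        rw [he] at hcon
        exact hL (L.length - (c : ℕ)) a false h2 hcon
      simp only [Fin.val_mk, dif_neg hcond]
      exact Subtype.ext (Fin.ext (by simp; omega))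
  right_inv := by
    rintro ⟨c, hc⟩
    by_cases h : L[L.length - (c : ℕ)]? = some (a, true)
    · simp only [dif_pos h]
      have hb : L.length - (c : ℕ) < L.length := (List.getElem?_eq_some_iff.mp h).1
      have hlt := c.isLt
      have hcond : ((c : ℕ) - 1) < L.length ∧
          L[L.length - 1 - ((c : ℕ) - 1)]? = some (a, true) := by
        refine ⟨by omega, ?_⟩
        have : L.length - 1 - ((c : ℕ) - 1) = L.length - (c : ℕ) := by omega
        rw [this]; exact h
      simp only [Fin.val_mk, dif_pos hcond]
      exact Subtype.ext (Fin.ext (by simp; omega))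
    · simp only [dif_neg h]
      have h2 : (c : ℕ) < L.length ∧ L[L.length - 1 - (c : ℕ)]? = some (a, false) :=
        hc.resolve_left h
      have hcond : ¬ (((c : ℕ) + 1) < L.length ∧
          L[L.length - 1 - ((c : ℕ) + 1)]? = some (a, true)) := by
        rintro ⟨hlt', hcon⟩
        have he : L.length - 1 - (c : ℕ) = (L.length - 1 - ((c : ℕ) + 1)) + 1 := by omega
        rw [he] at h2
        exact hL (L.length - 1 - ((c : ℕ) + 1)) a true hcon h2.2
      simp only [Fin.val_mk, dif_neg hcond]
      exact Subtype.ext (Fin.ext (by simp))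

/-- The permutation attached to the generator `a`, moving positions of `a`-letters
of the word up (and of `a⁻¹`-letters down). -/
lemma aux_perm (L : List (α × Bool)) (hL : auxNC L) (a : α) :
    ∃ σ : Equiv.Perm (Fin (L.length + 1)),
      (∀ i : ℕ, L[i]? = some (a, true) →
        σ ⟨L.length - 1 - i, by omega⟩ = ⟨L.length - i, by omega⟩) ∧
      (∀ i : ℕ, L[i]? = some (a, false) →
        σ ⟨L.length - i, by omega⟩ = ⟨L.length - 1 - i, by omega⟩) := by
  refine ⟨(auxEqv L hL a).extendSubtype, ?_, ?_⟩
  · intro i hi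
    have hilt : i < L.length := (List.getElem?_eq_some_iff.mp hi).1
    have hp : auxP L a ⟨L.length - 1 - i, by omega⟩ := by
      refine Or.inl ⟨by simp; omega, ?_⟩
      have : L.length - 1 - (L.length - 1 - i) = i := by omega
      simpa [this] using hi
    rw [Equiv.extendSubtype_apply_of_mem _ _ hp]
    have hcond : ((L.length - 1 - i : ℕ)) < L.length ∧
        L[L.length - 1 - (L.length - 1 - i : ℕ)]? = some (a, true) := by
      refine ⟨by omega, ?_⟩
      have : L.length - 1 - (L.length - 1 - i) = i := by omega
      rw [this]; exact hi
    show ((auxEqv L hL a) ⟨_, hp⟩ : Fin (L.length + 1)) = _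
    simp only [auxEqv, Equiv.coe_fn_mk, Fin.val_mk, dif_pos hcond]
    exact Fin.ext (by simp; omega)
  · intro i hi
    have hilt : i < L.length := (List.getElem?_eq_some_iff.mp hi).1
    have hp : auxP L a ⟨L.length - i, by omega⟩ := by
      refine Or.inr ?_
      have : L.length - (L.length - i) = i := by omega
      simpa [this] using hi
    rw [Equiv.extendSubtype_apply_of_mem _ _ hp]
    have hcond : ¬ (((L.length - i : ℕ)) < L.length ∧
        L[L.length - 1 - (L.length - i : ℕ)]? = some (a, true)) := by
      rintro ⟨hlt', hcon⟩
      have hi1 : 1 ≤ i := by omega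
      have he : i = (L.length - 1 - (L.length - i)) + 1 := by omega
      rw [he] at hi
      exact hL _ a true hcon hi
    show ((auxEqv L hL a) ⟨_, hp⟩ : Fin (L.length + 1)) = _
    simp only [auxEqv, Equiv.coe_fn_mk, Fin.val_mk, dif_neg hcond]
    exact Fin.ext (by simp; omega)

/-- Residual finiteness of free groups: any nontrivial element survives in some
finite group. -/
lemma aux_resid_finite (w : FreeGroup α) (hw : w ≠ 1) :
    ∃ (G : Type) (_ : Group G) (_ : Finite G) (f : FreeGroup α →* G), f w ≠ 1 := by
  classical
  set L := w.toWord with hLdef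
  have hNC : auxNC L := fun i x b h1 h2 => aux_no_cancel w i x b h1 h2
  have hNpos : 0 < L.length := by
    rcases Nat.eq_zero_or_pos L.length with h | h
    · exact absurd (FreeGroup.toWord_eq_nil_iff.mp (List.length_eq_zero_iff.mp h)) hw
    · exact h
  choose σ keyA keyB using fun a => aux_perm L hNC a
  refine ⟨Equiv.Perm (Fin (L.length + 1)), inferInstance, inferInstance,
    FreeGroup.lift fun a => σ a, ?_⟩
  set g : α × Bool → Equiv.Perm (Fin (L.length + 1)) :=
    fun x => cond x.2 (σ x.1) (σ x.1)⁻¹ with hg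
  have hw' : FreeGroup.lift (fun a => σ a) w = ((L.map g).prod) := by
    conv_lhs => rw [← FreeGroup.mk_toWord (x := w)]
    exact FreeGroup.lift_mk
  have main : ∀ j : ℕ, (hj : j ≤ L.length) →
      ((L.drop (L.length - j)).map g).prod ⟨0, by omega⟩ = ⟨j, by omega⟩ := by
    intro j
    induction j with
    | zero =>
      intro _
      have hdrop : L.drop (L.length - 0) = [] := by
        simp
      rw [hdrop]
      simp
    | succ j ih =>
      intro hj
      have hilt : L.length - (j + 1) < L.length := by omega
      have hd : L.drop (L.length - (j + 1)) =
          L[L.length - (j + 1)] :: L.drop ((L.length - (j + 1)) + 1) :=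
        (List.getElem_cons_drop (by omega)).symm
      have he : (L.length - (j + 1)) + 1 = L.length - j := by omega
      rw [hd, he, List.map_cons, List.prod_cons, Equiv.Perm.mul_apply, ih (by omega)]
      have hgetsome : L[L.length - (j + 1)]? = some (L[L.length - (j+1)]'(by omega)) :=
        List.getElem?_eq_getElem (by omega)
      set x := L[L.length - (j+1)]'(by omega) with hx
      have ea : (⟨j, by omega⟩ : Fin (L.length + 1)) =
          ⟨L.length - 1 - (L.length - (j + 1)), by omega⟩ := by
        apply Fin.ext
        show j = L.length - 1 - (L.length - (j + 1))
        omega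
      have eb : (⟨j + 1, by omega⟩ : Fin (L.length + 1)) =
          ⟨L.length - (L.length - (j + 1)), by omega⟩ := by
        apply Fin.ext
        show j + 1 = L.length - (L.length - (j + 1))
        omega
      cases hb : x.2 with
      | true =>
        have hsome : L[L.length - (j + 1)]? = some (x.1, true) := by
          rw [hgetsome]; congr 1; rw [← hb]
        have hA := keyA x.1 (L.length - (j + 1)) hsome
        have hgx : g x = σ x.1 := by rw [hg]; simp [hb]
        rw [hgx, ea, eb, hA]
      | false =>
        have hsome : L[L.length - (j + 1)]? = some (x.1, false) := by
          rw [hgetsome]; congr 1; rw [← hb]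
        have hB := keyB x.1 (L.length - (j + 1)) hsome
        have hgx : g x = (σ x.1)⁻¹ := by rw [hg]; simp [hb]
        rw [hgx, ea, eb, ← hB]
        exact (σ x.1).symm_apply_apply _
  intro hcon
  have hfin := main L.length (le_refl _)
  rw [Nat.sub_self, List.drop_zero, ← hw', hcon] at hfin
  simp only [Equiv.Perm.coe_one, id_eq] at hfin
  have : (0 : ℕ) = L.length := congrArg Fin.val hfin
  omega

end Stallings

theorem stmt_1 (n : ℕ) (φ : FreeGroup (Fin n) →* FreeGroup (Fin n))
    (hφ : Function.Surjective φ) : Function.Bijective φ := by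
  refine ⟨?_, hφ⟩
  rw [injective_iff_map_eq_one]
  by_contra hcon
  push_neg at hcon
  obtain ⟨w, hw1, hw⟩ := hcon
  obtain ⟨G, _, _, f, hf⟩ := aux_resid_finite w hw
  have : Finite (FreeGroup (Fin n) →* G) := Finite.of_equiv _ FreeGroup.lift
  have hinj : Function.Injective fun ψ : FreeGroup (Fin n) →* G => ψ.comp φ := by
    intro ψ₁ ψ₂ h
    exact (MonoidHom.cancel_right hφ).mp h
  obtain ⟨ψ, hψ⟩ := (Finite.injective_iff_surjective.mp hinj) f
  apply hf
  have : f w = ψ (φ w) := by rw [← hψ]; rfl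
  rw [this, hw1, map_one]
end

section
/- Suppose G and G' are groups whose commutator subgroups are free groups of the same finite rank g, and G/[G,G] ≅ G'/[G',G'] ≅ ℤ. If φ : G → G' is a surjective homomorphism, then φ is an isomorphism. -/
open Function

lemma exists_perm_eqOn {X : Type*} [Fintype X] [DecidableEq X] (f : X → X) (D : Set X)
    (h : D.InjOn f) : ∃ σ : Equiv.Perm X, ∀ x ∈ D, σ x = f x := by
  classical
  let e : D ≃ (f '' D) := Equiv.Set.imageOfInjOn f D h
  refine ⟨Equiv.extendSubtype e, fun x hx => ?_⟩
  rw [Equiv.extendSubtype_apply_of_mem e x hx]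
  rfl
lemma freeGroup_rf {α : Type*} (w : FreeGroup α) (hw : w ≠ 1) :
    ∃ (m : ℕ) (π : FreeGroup α →* Equiv.Perm (Fin (m + 1))), π w ≠ 1 := by
  classical
  set L := w.toWord with hLdef
  set n := L.length with hn
  have hLnil : L ≠ [] := fun h => hw (FreeGroup.toWord_eq_nil_iff.mp h)
  have hn1 : 0 < n := List.length_pos_iff.mpr hLnil
  have hadj : ∀ (j : ℕ) (x : α) (b : Bool),
      ¬(L[j]? = some (x, b) ∧ L[j + 1]? = some (x, !b)) := by
    rintro j x b ⟨h1, h2⟩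
    have hj1 : j + 1 < n := (List.getElem?_eq_some_iff.mp h2).1
    have hj : j < n := by omega
    have hdecomp : L = L.take j ++ (x, b) :: (x, !b) :: L.drop (j + 2) := by
      conv_lhs => rw [← List.take_append_drop j L]
      congr 1
      rw [List.drop_eq_getElem_cons hj, (List.getElem?_eq_some_iff.mp h1).2]
      congr 1
      rw [List.drop_eq_getElem_cons hj1, (List.getElem?_eq_some_iff.mp h2).2]
    exact FreeGroup.reduce.not ((FreeGroup.reduce_toWord w).trans hdecomp)
  set A : α → ℕ → Prop := fun a m => m < n ∧ L[n - 1 - m]? = some (a, true) with hA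
  set B : α → ℕ → Prop := fun a m => L[n - m]? = some (a, false) with hB
  have hBpos : ∀ a m, B a m → 0 < m := by
    intro a m h
    have := (List.getElem?_eq_some_iff.mp h).1
    omega
  have hAB : ∀ a m, A a m → B a m → False := by
    intro a m ⟨hm, h1⟩ h2
    have hnm : n - m = (n - 1 - m) + 1 := by omega
    exact hadj (n - 1 - m) a true ⟨h1, by rw [← hnm]; exact h2⟩
  set f : α → Fin (n + 1) → Fin (n + 1) := fun a x =>
    if h : A a x.val then ⟨x.val + 1, Nat.succ_lt_succ h.1⟩
    else if h' : B a x.val then ⟨x.val - 1, Nat.lt_of_le_of_lt (Nat.sub_le _ _) x.isLt⟩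
    else x with hf
  set D : α → Set (Fin (n + 1)) := fun a => {x | A a x.val ∨ B a x.val} with hD
  have hfA : ∀ a (x : Fin (n + 1)), A a x.val → (f a x).val = x.val + 1 := by
    intro a x h; simp only [hf, dif_pos h]
  have hfB : ∀ a (x : Fin (n + 1)), B a x.val → (f a x).val = x.val - 1 := by
    intro a x h
    have hnA : ¬A a x.val := fun h' => hAB a x.val h' h
    simp only [hf, dif_neg hnA, dif_pos h]
  have hmix : ∀ a (x y : ℕ), A a x → B a y → y = x + 2 → False := by
    intro a x y hAx hBy hxy
    subst hxy
    have hxn := hAx.1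
    rcases Nat.lt_or_ge n (x + 2) with hgt | hle
    · have h0 : n - (x + 2) = 0 := by omega
      have h0' : n - 1 - x = 0 := by omega
      have hBy' : L[n - (x + 2)]? = some (a, false) := hBy
      have h2 : L[n - 1 - x]? = some (a, true) := hAx.2
      rw [h0] at hBy'
      rw [h0'] at h2
      rw [h2] at hBy'
      simp at hBy'
    · have hidx : n - (x + 2) + 1 = n - 1 - x := by omega
      exact hadj (n - (x + 2)) a false ⟨hBy, by rw [hidx]; exact hAx.2⟩
  have hinj : ∀ a, Set.InjOn (f a) (D a) := by
    intro a x hx y hy hxy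
    have hval : (f a x).val = (f a y).val := congrArg Fin.val hxy
    rcases hx with hAx | hBx <;> rcases hy with hAy | hBy
    · rw [hfA a x hAx, hfA a y hAy] at hval; exact Fin.ext (by omega)
    · rw [hfA a x hAx, hfB a y hBy] at hval
      have h1 := hBpos a y.val hBy
      exact (hmix a x.val y.val hAx hBy (by omega)).elim
    · rw [hfB a x hBx, hfA a y hAy] at hval
      have h1 := hBpos a x.val hBx
      exact (hmix a y.val x.val hAy hBx (by omega)).elim
    · rw [hfB a x hBx, hfB a y hBy] at hval
      have h1 := hBpos a x.val hBx
      have h2 := hBpos a y.val hBy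
      exact Fin.ext (by omega)
  choose σ hσ using fun a => exists_perm_eqOn (f a) (D a) (hinj a)
  refine ⟨n, FreeGroup.lift σ, ?_⟩
  set gl : α × Bool → Equiv.Perm (Fin (n + 1)) :=
    fun p => cond p.2 (σ p.1) (σ p.1)⁻¹ with hgl
  have key : ∀ k (hk : k ≤ n),
      ((L.drop (n - k)).map gl).prod ⟨0, Nat.succ_pos n⟩ = ⟨k, Nat.lt_succ_of_le hk⟩ := by
    intro k
    induction k with
    | zero =>
      intro hk
      have hdn : L.drop n = [] := List.drop_eq_nil_of_le (le_of_eq hn.symm)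
      rw [Nat.sub_zero, hdn]
      rfl
    | succ k ih =>
      intro hk
      have hjn : n - (k + 1) < n := by omega
      have hdrop : L.drop (n - (k + 1)) = L[n - (k + 1)] :: L.drop (n - k) := by
        rw [List.drop_eq_getElem_cons hjn]
        congr 2
        omega
      rw [hdrop, List.map_cons, List.prod_cons, Equiv.Perm.mul_apply, ih (by omega)]
      have hget : L[n - (k + 1)]? = some (L[n - (k + 1)]'hjn) := List.getElem?_eq_getElem hjn
      rcases hp : L[n - (k + 1)]'hjn with ⟨a, b⟩
      rw [hp] at hget
      cases b
      · have hBk : B a (k + 1) := hget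
        have hmem : (⟨k + 1, by omega⟩ : Fin (n + 1)) ∈ D a := Or.inr hBk
        have h1 : σ a ⟨k + 1, by omega⟩ = ⟨k, by omega⟩ := by
          rw [hσ a _ hmem]
          exact Fin.ext (hfB a _ hBk)
        show (σ a)⁻¹ ⟨k, _⟩ = ⟨k + 1, _⟩
        rw [← h1, Equiv.Perm.inv_def, Equiv.symm_apply_apply]
      · have hAk : A a k := ⟨by omega, by
          rw [show n - 1 - k = n - (k + 1) from by omega]; exact hget⟩
        have hmem : (⟨k, by omega⟩ : Fin (n + 1)) ∈ D a := Or.inl hAk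
        show σ a ⟨k, _⟩ = ⟨k + 1, _⟩
        rw [hσ a _ hmem]
        exact Fin.ext (hfA a _ hAk)
  intro hone
  have h0 : (FreeGroup.lift σ) w ⟨0, Nat.succ_pos n⟩ = ⟨0, Nat.succ_pos n⟩ := by
    rw [hone]; rfl
  have hcalc : (FreeGroup.lift σ) w ⟨0, Nat.succ_pos n⟩ = ⟨n, Nat.lt_succ_self n⟩ := by
    conv_lhs => rw [← FreeGroup.mk_toWord (x := w)]
    rw [FreeGroup.lift_mk]
    have hk := key n le_rfl
    rw [Nat.sub_self, List.drop_zero] at hk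
    exact hk
  have hcontra : (0 : ℕ) = n := congrArg Fin.val (h0.symm.trans hcalc)
  omega
lemma freeGroup_hopf {g : ℕ} (f : FreeGroup (Fin g) →* FreeGroup (Fin g))
    (hf : Function.Surjective f) : Function.Injective f := by
  refine (injective_iff_map_eq_one f).mpr fun w hwker => ?_
  by_contra hw
  obtain ⟨m, π, hπ⟩ := freeGroup_rf w hw
  have hcomp : Function.Injective
      fun ψ : FreeGroup (Fin g) →* Equiv.Perm (Fin (m + 1)) => ψ.comp f :=
    fun ψ₁ ψ₂ h => (MonoidHom.cancel_right hf).mp h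
  have hfin : Finite (FreeGroup (Fin g) →* Equiv.Perm (Fin (m + 1))) :=
    Finite.of_equiv _ FreeGroup.lift
  obtain ⟨ψ, hψ⟩ := Finite.surjective_of_injective hcomp π
  apply hπ
  have : π w = ψ (f w) := by rw [← hψ]; rfl
  rw [this, hwker, map_one]

lemma mulint_hopf (f : Multiplicative ℤ →* Multiplicative ℤ)
    (hf : Function.Surjective f) : Function.Injective f := by
  set c : ℤ := Multiplicative.toAdd (f (Multiplicative.ofAdd 1)) with hc
  have hfx : ∀ x : Multiplicative ℤ,
      Multiplicative.toAdd (f x) = Multiplicative.toAdd x * c := by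
    intro x
    have hx : x = (Multiplicative.ofAdd (1 : ℤ)) ^ (Multiplicative.toAdd x) := by
      rw [← ofAdd_zsmul]
      simp
    conv_lhs => rw [hx]
    rw [map_zpow, toAdd_zpow, ← hc]
    simp [mul_comm]
  obtain ⟨x, hx⟩ := hf (Multiplicative.ofAdd 1)
  have hc1 : Multiplicative.toAdd x * c = 1 := by
    rw [← hfx, hx, toAdd_ofAdd]
  have hcne : c ≠ 0 := by intro h; rw [h, mul_zero] at hc1; exact one_ne_zero hc1.symm
  intro u v huv
  have h2 : Multiplicative.toAdd u * c = Multiplicative.toAdd v * c := by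
    rw [← hfx, ← hfx, huv]
  have h3 := mul_right_cancel₀ hcne h2
  exact Multiplicative.toAdd.injective h3
theorem stmt_15 {G G' : Type*} [Group G] [Group G'] (g : ℕ)
    (e : commutator G ≃* FreeGroup (Fin g))
    (e' : commutator G' ≃* FreeGroup (Fin g))
    (a : Abelianization G ≃* Multiplicative ℤ)
    (a' : Abelianization G' ≃* Multiplicative ℤ)
    (φ : G →* G') (hφ : Function.Surjective φ) :
    Function.Bijective φ := by
  refine ⟨?_, hφ⟩
  -- surjectivity of the induced map on abelianizations
  have hofsurj : Function.Surjective (Abelianization.of (G := G')) :=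
    fun y => QuotientGroup.mk_surjective y
  have habsurj : Function.Surjective (Abelianization.map φ) := by
    intro y
    obtain ⟨g', hg'⟩ := hofsurj y
    obtain ⟨x, hx⟩ := hφ g'
    exact ⟨Abelianization.of x, by rw [Abelianization.map_of, hx, hg']⟩
  -- injectivity of the induced map on abelianizations, via Z being Hopfian
  have habinj : Function.Injective (Abelianization.map φ) := by
    have hFsurj : Function.Surjective
        (a'.toMonoidHom.comp ((Abelianization.map φ).comp a.symm.toMonoidHom)) :=
      a'.surjective.comp (habsurj.comp a.symm.surjective)
    have hFinj := mulint_hopf _ hFsurj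
    intro u v huv
    have h1 : a'.toMonoidHom.comp ((Abelianization.map φ).comp a.symm.toMonoidHom) (a u)
        = a'.toMonoidHom.comp ((Abelianization.map φ).comp a.symm.toMonoidHom) (a v) := by
      simp [huv]
    exact a.injective (hFinj h1)
  -- kernel of φ is inside the commutator subgroup
  have hker : ∀ x : G, φ x = 1 → x ∈ commutator G := by
    intro x hx
    have h1 : Abelianization.map φ (Abelianization.of x) = Abelianization.map φ 1 := by
      rw [Abelianization.map_of, hx, map_one, map_one]
    have h2 : Abelianization.of x = 1 := habinj h1
    exact (QuotientGroup.eq_one_iff x).mp h2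
  -- the restriction of φ to the commutator subgroups
  have hmap : Subgroup.map φ (commutator G) = commutator G' := by
    rw [commutator_def, Subgroup.map_commutator, ← MonoidHom.range_eq_map,
      MonoidHom.range_eq_top.mpr hφ, commutator_def]
  let cEq : (Subgroup.map φ (commutator G)) ≃* (commutator G') := MulEquiv.subgroupCongr hmap
  let ρ : commutator G →* commutator G' :=
    cEq.toMonoidHom.comp (φ.subgroupMap (commutator G))
  have hρval : ∀ x : commutator G, (ρ x : G') = φ x := fun x => rfl
  have hρsurj : Function.Surjective ρ :=
    cEq.surjective.comp (φ.subgroupMap_surjective (commutator G))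
  have hρinj : Function.Injective ρ := by
    have hψ := freeGroup_hopf (e'.toMonoidHom.comp (ρ.comp e.symm.toMonoidHom))
      (e'.surjective.comp (hρsurj.comp e.symm.surjective))
    intro u v huv
    have h1 : e'.toMonoidHom.comp (ρ.comp e.symm.toMonoidHom) (e u)
        = e'.toMonoidHom.comp (ρ.comp e.symm.toMonoidHom) (e v) := by
      simp [huv]
    exact e.injective (hψ h1)
  refine (injective_iff_map_eq_one φ).mpr fun x hx => ?_
  have hxc : x ∈ commutator G := hker x hx
  have h1 : ρ ⟨x, hxc⟩ = 1 := by
    apply Subtype.ext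
    rw [hρval ⟨x, hxc⟩]
    exact hx
  have h2 : (⟨x, hxc⟩ : commutator G) = 1 := hρinj (h1.trans (map_one ρ).symm)
  exact congrArg Subtype.val h2
end
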